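/- For every s ∈ ℂ with Re(s) > 0, one has the identity Σ_{α ≥ 1, α odd} (μ(α)/α²) · Σ_{m ≥ 1, gcd(m,2α)=1} φ(m²)/m^{3+s} = (ζ(1+s)/ζ(2+s)) · ((1 − 2^{−1−s})/(1 − 2^{−2−s})) · ∏_{p odd prime} (1 − p^{−2}·(1 − p^{−1−s})/(1 − p^{−2−s})); all the series and the product converge absolutely in this region. -/

import Mathlib

set_option maxHeartbeats 1000000

namespace DSI
open Complex ArithmeticFunction

noncomputable def A (s : ℂ) (p : ℕ) : ℂ := (1 - (p:ℂ)^(-(1:ℂ)-s)) / (1 - (p:ℂ)^(-(2:ℂ)-s))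
noncomputable def E (s : ℂ) (p : ℕ) : ℂ := (1 - (p:ℂ)^(-(2:ℂ)-s)) / (1 - (p:ℂ)^(-(1:ℂ)-s))
noncomputable def g (s : ℂ) (m : ℕ) : ℂ := (Nat.totient (m^2) : ℂ) / (m:ℂ)^((3:ℂ)+s)
noncomputable def f (s : ℂ) (α m : ℕ) : ℂ := if Nat.Coprime m (2*α) then g s m else 0
noncomputable def h (s : ℂ) (α : ℕ) : ℂ :=
  if Odd α then ((moebius α : ℂ)/(α:ℂ)^2) * ∏ p ∈ α.primeFactors, A s p else 0
noncomputable def D (s : ℂ) (p : ℕ) : ℂ := 1 - (p:ℂ)^(-(2:ℂ)) * A s p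

variable {s : ℂ} {p : ℕ}

lemma norm_cpow_lt_one (hp : 2 ≤ p) {c : ℂ} (hc : c.re < 0) : ‖(p:ℂ)^c‖ < 1 := by
  rw [Complex.norm_natCast_cpow_of_pos (by omega)]
  exact Real.rpow_lt_one_of_one_lt_of_neg (by exact_mod_cast hp) hc

lemma one_sub_ne (hp : 2 ≤ p) {c : ℂ} (hc : c.re < 0) : 1 - (p:ℂ)^c ≠ 0 := by
  intro H
  have h1 : (p:ℂ)^c = 1 := by linear_combination -H
  have := norm_cpow_lt_one hp hc
  rw [h1, norm_one] at this
  exact lt_irrefl _ this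

lemma re1 (hs : 0 < s.re) : (-(1:ℂ)-s).re < 0 := by simp [Complex.sub_re]; linarith
lemma re2 (hs : 0 < s.re) : (-(2:ℂ)-s).re < 0 := by simp [Complex.sub_re]; linarith

lemma E_ne_zero (hs : 0 < s.re) (hp : 2 ≤ p) : E s p ≠ 0 :=
  div_ne_zero (one_sub_ne hp (re2 hs)) (one_sub_ne hp (re1 hs))

lemma E_inv (hs : 0 < s.re) (hp : 2 ≤ p) : (E s p)⁻¹ = A s p := by
  rw [E, A, inv_div]

lemma g_zero : g s 0 = 0 := by
  simp [g]

lemma g_one : g s 1 = 1 := by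
  simp [g]

lemma g_mult {m n : ℕ} (hmn : Nat.Coprime m n) : g s (m*n) = g s m * g s n := by
  rcases Nat.eq_zero_or_pos m with hm | hm
  · subst hm
    have : n = 1 := by simpa using hmn
    simp [this, g_zero, g_one]
  rcases Nat.eq_zero_or_pos n with hn | hn
  · subst hn
    have : m = 1 := by simpa [Nat.coprime_zero_right] using hmn
    simp [this, g_zero, g_one]
  have htot : Nat.totient ((m*n)^2) = Nat.totient (m^2) * Nat.totient (n^2) := by
    rw [mul_pow]
    exact Nat.totient_mul (Nat.Coprime.pow _ _ hmn)
  have hden : ((m*n : ℕ):ℂ)^((3:ℂ)+s) = (m:ℂ)^((3:ℂ)+s) * (n:ℂ)^((3:ℂ)+s) := by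
    have h1 : ((m*n : ℕ):ℂ) = (((m:ℝ)):ℂ) * (((n:ℝ)):ℂ) := by push_cast; ring
    rw [h1, Complex.mul_cpow_ofReal_nonneg (Nat.cast_nonneg m) (Nat.cast_nonneg n)]
    norm_num
  rw [g, g, g, htot, hden]
  push_cast
  rw [div_mul_div_comm]


lemma g_norm_le (hs : 0 < s.re) (m : ℕ) : ‖g s m‖ ≤ 1/(m:ℝ)^(1+s.re) := by
  rcases Nat.eq_zero_or_pos m with hm | hm
  · subst hm; simp [g_zero]
    positivity
  have hm0 : (0:ℝ) < (m:ℝ) := by exact_mod_cast hm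
  have hnorm : ‖g s m‖ = (Nat.totient (m^2) : ℝ) / (m:ℝ)^((3:ℝ)+s.re) := by
    rw [g, norm_div, Complex.norm_natCast, Complex.norm_natCast_cpow_of_pos hm]
    norm_num
  rw [hnorm, div_le_div_iff₀ (Real.rpow_pos_of_pos hm0 _) (Real.rpow_pos_of_pos hm0 _),
    one_mul]
  have key : (m:ℝ)^((3:ℝ)+s.re) = (m:ℝ)^2 * (m:ℝ)^(1+s.re) := by
    rw [show (3:ℝ)+s.re = 2 + (1+s.re) by ring, Real.rpow_add hm0]
    norm_num [Real.rpow_two]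
  rw [key]
  apply mul_le_mul_of_nonneg_right _ (Real.rpow_pos_of_pos hm0 _).le
  calc (Nat.totient (m^2) : ℝ) ≤ ((m^2 : ℕ) : ℝ) := by exact_mod_cast Nat.totient_le _
    _ = (m:ℝ)^2 := by push_cast; ring

lemma g_summable (hs : 0 < s.re) : Summable (fun m => ‖g s m‖) := by
  apply Summable.of_nonneg_of_le (fun m => norm_nonneg _) (g_norm_le hs)
  exact Real.summable_one_div_nat_rpow.mpr (by linarith)

lemma f_norm_le (α m : ℕ) : ‖f s α m‖ ≤ ‖g s m‖ := by
  rw [f]; split <;> simp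

lemma f_summable (hs : 0 < s.re) (α : ℕ) : Summable (fun m => ‖f s α m‖) :=
  Summable.of_nonneg_of_le (fun m => norm_nonneg _) (f_norm_le α) (g_summable hs)

lemma g_prime_pow (hp : p.Prime) (e : ℕ) :
    g s (p^(e+1)) = (1 - (p:ℂ)⁻¹) * ((p:ℂ)^(-(1:ℂ)-s))^(e+1) := by
  have hP : (p:ℂ) ≠ 0 := Nat.cast_ne_zero.mpr hp.pos.ne'
  have htot : Nat.totient ((p^(e+1))^2) = p^(2*e+1) * (p - 1) := by
    rw [← pow_mul, Nat.totient_prime_pow hp (by omega),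
      show (e+1)*2-1 = 2*e+1 from by omega]
  have hcast : ((p^(2*e+1) * (p-1) : ℕ) : ℂ) = (p:ℂ)^(2*e+1) * ((p:ℂ) - 1) := by
    push_cast [Nat.cast_sub hp.one_le]
    ring
  have hnum : (p:ℂ)^(2*e+1) = (p:ℂ)^((2*e+1 : ℕ):ℂ) := (Complex.cpow_natCast _ _).symm
  have hden : ((p^(e+1) : ℕ):ℂ)^((3:ℂ)+s) = (p:ℂ)^(((e+1:ℕ):ℂ) * ((3:ℂ)+s)) := by
    rw [show ((p^(e+1):ℕ):ℂ) = ((p:ℂ))^(e+1) from by push_cast; ring,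
      ← Complex.natCast_cpow_natCast_mul]
  have hpow : ((p:ℂ)^(-(1:ℂ)-s))^(e+1) = (p:ℂ)^(((e+1:ℕ):ℂ) * (-(1:ℂ)-s)) := by
    rw [Complex.cpow_nat_mul]
  rw [g, htot, hcast, hden, hpow, hnum]
  rw [div_eq_iff (by simp [Complex.cpow_eq_zero_iff, hP])]
  rw [mul_comm ((p:ℂ)^((2*e+1 : ℕ):ℂ)) ((p:ℂ) - 1)]
  have hsplit : (p:ℂ)^((2*e+1 : ℕ):ℂ) = (p:ℂ)⁻¹ * ((p:ℂ)^(((e+1:ℕ):ℂ) * (-(1:ℂ)-s)) * (p:ℂ)^(((e+1:ℕ):ℂ) * ((3:ℂ)+s))) := by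
    rw [← Complex.cpow_add _ _ hP, ← Complex.cpow_neg_one, ← Complex.cpow_add _ _ hP]
    congr 1
    push_cast
    ring
  rw [hsplit]
  field_simp


lemma local_g (hs : 0 < s.re) (hp : p.Prime) : ∑' e : ℕ, g s (p^e) = E s p := by
  have hp2 : 2 ≤ p := hp.two_le
  have hP : (p:ℂ) ≠ 0 := Nat.cast_ne_zero.mpr hp.pos.ne'
  set x := (p:ℂ)^(-(1:ℂ)-s) with hxdef
  have hx : ‖x‖ < 1 := norm_cpow_lt_one hp2 (re1 hs)
  have hx1 : (1:ℂ) - x ≠ 0 := one_sub_ne hp2 (re1 hs)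
  have hsum : Summable (fun e : ℕ => g s (p^e)) :=
    ((g_summable hs).of_norm).comp_injective (Nat.pow_right_injective hp2)
  rw [Summable.tsum_eq_zero_add hsum]
  simp only [pow_zero, g_one]
  have : ∀ e : ℕ, g s (p^(e+1)) = (1 - (p:ℂ)⁻¹) * (x * x^e) := by
    intro e
    rw [g_prime_pow hp e, pow_succ, mul_comm (x^e) x]
  rw [tsum_congr this, tsum_mul_left, tsum_mul_left, tsum_geometric_of_norm_lt_one hx]
  have hy : (p:ℂ)^(-(2:ℂ)-s) = (p:ℂ)⁻¹ * x := by
    rw [hxdef, ← Complex.cpow_neg_one, ← Complex.cpow_add _ _ hP]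
    congr 1
    ring
  rw [E, hy, ← hxdef]
  field_simp
  ring

lemma hasProd_E (hs : 0 < s.re) :
    HasProd (fun p : Nat.Primes => E s (p:ℕ)) (∑' m, g s m) := by
  have H := EulerProduct.eulerProduct_hasProd (f := g s) g_one (fun {m n} h => g_mult h)
    (g_summable hs) g_zero
  refine H.congr_fun fun p => ?_
  exact (local_g hs p.prop).symm

lemma tsum_g (hs : 0 < s.re) :
    ∑' m, g s m = riemannZeta (1+s) / riemannZeta (2+s) := by
  have h1re : 1 < (1+s).re := by simp [Complex.add_re]; linarith
  have h2re : 1 < (2+s).re := by simp [Complex.add_re]; linarith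
  have h1 := riemannZeta_eulerProduct_hasProd h1re
  have h2 := riemannZeta_eulerProduct_hasProd h2re
  have hmul := h2.mul (hasProd_E hs)
  have hfun : (fun p : Nat.Primes => (1 - (p:ℂ)^(-(2+s)))⁻¹ * E s (p:ℕ))
      = fun p : Nat.Primes => (1 - (p:ℂ)^(-(1+s)))⁻¹ := by
    funext p
    have hp2 : 2 ≤ (p:ℕ) := p.prop.two_le
    have e1 : -(1+s) = -(1:ℂ)-s := by ring
    have e2 : -(2+s) = -(2:ℂ)-s := by ring
    rw [e1, e2, E]
    have hy : (1:ℂ) - ((p:ℕ):ℂ)^(-(2:ℂ)-s) ≠ 0 := one_sub_ne hp2 (re2 hs)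
    have hx : (1:ℂ) - ((p:ℕ):ℂ)^(-(1:ℂ)-s) ≠ 0 := one_sub_ne hp2 (re1 hs)
    field_simp
  rw [hfun] at hmul
  have := h1.unique hmul
  rw [eq_div_iff (riemannZeta_ne_zero_of_one_lt_re h2re)]
  rw [this]
  ring


lemma f_one {α : ℕ} : f s α 1 = 1 := by
  simp [f, Nat.Coprime, g_one]

lemma f_zero {α : ℕ} (hα : Odd α) : f s α 0 = 0 := by
  have h1 : 2*α ≠ 1 := by rcases hα with ⟨k, hk⟩; omega
  simp [f, Nat.coprime_zero_left, h1]

lemma f_mult {α m n : ℕ} (hmn : Nat.Coprime m n) : f s α (m*n) = f s α m * f s α n := by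
  by_cases hm : Nat.Coprime m (2*α) <;> by_cases hn : Nat.Coprime n (2*α)
  · rw [f, f, f, if_pos hm, if_pos hn, if_pos (Nat.Coprime.mul hm hn), g_mult hmn]
  · rw [f, f, f, if_pos hm, if_neg hn, if_neg (fun hc => hn (Nat.Coprime.coprime_dvd_left ⟨m, by ring⟩ hc)), mul_zero]
  · rw [f, f, f, if_neg hm, if_pos hn, if_neg (fun hc => hm (Nat.Coprime.coprime_dvd_left ⟨n, by ring⟩ hc)), zero_mul]
  · rw [f, f, f, if_neg hm, if_neg hn, if_neg (fun hc => hm (Nat.Coprime.coprime_dvd_left ⟨n, by ring⟩ hc)), mul_zero]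

lemma local_f (hs : 0 < s.re) (hp : p.Prime) {α : ℕ} (hα : Odd α) :
    ∑' e : ℕ, f s α (p^e) = if p ∣ 2*α then 1 else E s p := by
  by_cases hd : p ∣ 2*α
  · rw [if_pos hd]
    rw [tsum_eq_single 0 ?_]
    · simpa using f_one
    intro e he
    have hp2 := hp.two_le
    have : ¬ Nat.Coprime (p^e) (2*α) := by
      intro hc
      have hpc : Nat.Coprime p (2*α) := Nat.Coprime.coprime_dvd_left (dvd_pow_self p he) hc
      have h1 : p ∣ 1 := hpc ▸ Nat.dvd_gcd dvd_rfl hd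
      have := Nat.le_of_dvd one_pos h1
      omega
    simp [f, this]
  · rw [if_neg hd]
    have hcop : ∀ e : ℕ, Nat.Coprime (p^e) (2*α) :=
      fun e => Nat.Coprime.pow_left e ((Nat.Prime.coprime_iff_not_dvd hp).mpr hd)
    have : ∀ e : ℕ, f s α (p^e) = g s (p^e) := fun e => by rw [f, if_pos (hcop e)]
    rw [tsum_congr this, local_g hs hp]

/-- the prime factors of n, as a Finset of Nat.Primes -/
noncomputable def pf (n : ℕ) : Finset Nat.Primes :=
  n.primeFactors.attach.map
    ⟨fun q => ⟨q.1, Nat.prime_of_mem_primeFactors q.2⟩,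
     fun a b hab => by
       apply Subtype.ext; exact congrArg (Subtype.val : Nat.Primes → ℕ) hab⟩

lemma mem_pf {n : ℕ} (q : Nat.Primes) : q ∈ pf n ↔ (q:ℕ) ∈ n.primeFactors := by
  constructor
  · rintro hq
    simp only [pf, Finset.mem_map, Finset.mem_attach, Function.Embedding.coeFn_mk] at hq
    obtain ⟨a, -, ha⟩ := hq
    rw [← ha]
    exact a.2
  · intro hq
    simp only [pf, Finset.mem_map, Finset.mem_attach, Function.Embedding.coeFn_mk, true_and]
    exact ⟨⟨(q:ℕ), hq⟩, Subtype.ext rfl⟩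

lemma prod_pf {n : ℕ} (F : ℕ → ℂ) : ∏ q ∈ pf n, F (q:ℕ) = ∏ q ∈ n.primeFactors, F q := by
  rw [pf, Finset.prod_map]
  exact Finset.prod_attach _ _

lemma tsum_f (hs : 0 < s.re) {α : ℕ} (hα : Odd α) :
    ∑' m, f s α m = (riemannZeta (1+s) / riemannZeta (2+s)) *
      ∏ q ∈ (2*α).primeFactors, A s q := by
  have hα0 : α ≠ 0 := by rintro rfl; simp at hα
  have H := EulerProduct.eulerProduct_hasProd (f := f s α) f_one (fun {m n} h => f_mult h)
    (f_summable hs α) (f_zero hα)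
  have H' : HasProd (fun p : Nat.Primes => if (p:ℕ) ∣ 2*α then (1:ℂ) else E s (p:ℕ))
      (∑' m, f s α m) := H.congr_fun fun p => (local_f hs p.prop hα).symm
  have hc : HasProd (fun p : Nat.Primes => if (p:ℕ) ∣ 2*α then E s (p:ℕ) else 1)
      (∏ q ∈ (2*α).primeFactors, E s (q:ℕ)) := by
    have := hasProd_prod_of_ne_finset_one (s := pf (2*α)) (L := SummationFilter.unconditional _)
      (f := fun p : Nat.Primes => if (p:ℕ) ∣ 2*α then E s (p:ℕ) else 1) ?_
    · convert this using 1
      rw [← prod_pf (fun q => E s q)]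
      apply Finset.prod_congr rfl
      intro q hq
      exact (if_pos (Nat.dvd_of_mem_primeFactors ((mem_pf q).mp hq))).symm
    · intro q hq
      show (if (q:ℕ) ∣ 2*α then E s (q:ℕ) else 1) = 1
      rw [if_neg]
      intro hdvd
      exact hq ((mem_pf q).mpr (Nat.mem_primeFactors.mpr ⟨q.prop, hdvd, by positivity⟩))
  have hEq : (fun p : Nat.Primes => (if (p:ℕ) ∣ 2*α then (1:ℂ) else E s (p:ℕ)) *
      (if (p:ℕ) ∣ 2*α then E s (p:ℕ) else 1)) = fun p : Nat.Primes => E s (p:ℕ) := by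
    funext p
    by_cases hd : (p:ℕ) ∣ 2*α <;> simp [hd]
  have hm := H'.mul hc
  rw [hEq] at hm
  have key := hm.unique (hasProd_E hs)
  have hprod_ne : ∏ q ∈ (2*α).primeFactors, E s (q:ℕ) ≠ 0 :=
    Finset.prod_ne_zero_iff.mpr fun q hq => E_ne_zero hs (Nat.prime_of_mem_primeFactors hq).two_le
  rw [tsum_g hs] at key
  have : ∑' m, f s α m = (riemannZeta (1+s) / riemannZeta (2+s)) *
      (∏ q ∈ (2*α).primeFactors, E s (q:ℕ))⁻¹ := by
    rw [← key, mul_inv_cancel_right₀ hprod_ne]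
  rw [this, ← Finset.prod_inv_distrib]
  congr 1
  apply Finset.prod_congr rfl
  intro q hq
  exact E_inv hs (Nat.prime_of_mem_primeFactors hq).two_le


lemma h_one : h s 1 = 1 := by
  simp [h]

lemma h_zero : h s 0 = 0 := by
  simp [h, Nat.odd_iff]

lemma h_mult {m n : ℕ} (hmn : Nat.Coprime m n) : h s (m*n) = h s m * h s n := by
  rcases eq_or_ne m 0 with rfl|hm0
  · have hn1 : n = 1 := by simpa using hmn
    simp [hn1, h_zero, h_one]
  rcases eq_or_ne n 0 with rfl|hn0
  · have hm1 : m = 1 := by simpa [Nat.coprime_zero_right] using hmn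
    simp [hm1, h_zero, h_one]
  by_cases hm : Odd m
  · by_cases hn : Odd n
    · rw [h, h, h, if_pos hm, if_pos hn, if_pos (hm.mul hn),
        Nat.primeFactors_mul hm0 hn0,
        Finset.prod_union (Nat.Coprime.disjoint_primeFactors hmn),
        ArithmeticFunction.isMultiplicative_moebius.map_mul_of_coprime hmn]
      push_cast
      ring
    · rw [h, h, h, if_pos hm, if_neg hn,
        if_neg (fun hc => hn ((Nat.odd_mul.mp hc).2)), mul_zero]
  · rw [h, h, if_neg hm, if_neg (fun hc => hm ((Nat.odd_mul.mp hc).1)), zero_mul]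

lemma A_norm_le (hs : 0 < s.re) (hp : p.Prime) (hodd : Odd p) :
    ‖A s p‖ ≤ Real.sqrt p := by
  have hp3 : 3 ≤ p := by
    have h2 : 2 ≤ p := hp.two_le
    rcases Nat.lt_or_ge p 3 with h|h
    · interval_cases p
      · simp [Nat.odd_iff] at hodd
    · exact h
  have hp3' : (3:ℝ) ≤ (p:ℝ) := by exact_mod_cast hp3
  have hp0 : (0:ℝ) < (p:ℝ) := by linarith
  have hp1 : (1:ℝ) ≤ (p:ℝ) := by linarith
  have hx : ‖(p:ℂ)^(-(1:ℂ)-s)‖ ≤ 1/3 := by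
    rw [Complex.norm_natCast_cpow_of_pos (by omega)]
    calc (p:ℝ)^((-(1:ℂ)-s).re) ≤ (p:ℝ)^(-1:ℝ) := by
          apply Real.rpow_le_rpow_of_exponent_le hp1
          have hre : (-(1:ℂ)-s).re = -1 - s.re := by simp [Complex.sub_re]
          rw [hre]; linarith
      _ = ((p:ℝ))⁻¹ := Real.rpow_neg_one _
      _ ≤ 1/3 := by rw [one_div]; exact inv_anti₀ (by norm_num) hp3'
  have hy : ‖(p:ℂ)^(-(2:ℂ)-s)‖ ≤ 1/9 := by
    rw [Complex.norm_natCast_cpow_of_pos (by omega)]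
    calc (p:ℝ)^((-(2:ℂ)-s).re) ≤ (p:ℝ)^(-2:ℝ) := by
          apply Real.rpow_le_rpow_of_exponent_le hp1
          have hre : (-(2:ℂ)-s).re = -2 - s.re := by simp [Complex.sub_re]
          rw [hre]; linarith
      _ = ((p:ℝ)^(2:ℝ))⁻¹ := by rw [← Real.rpow_neg hp0.le]
      _ ≤ 1/9 := by
          rw [one_div, Real.rpow_two]
          apply inv_anti₀ (by norm_num)
          nlinarith
  have hnum : ‖(1:ℂ) - (p:ℂ)^(-(1:ℂ)-s)‖ ≤ 4/3 := by
    calc ‖(1:ℂ) - (p:ℂ)^(-(1:ℂ)-s)‖ ≤ ‖(1:ℂ)‖ + ‖(p:ℂ)^(-(1:ℂ)-s)‖ := norm_sub_le _ _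
      _ ≤ 1 + 1/3 := by rw [norm_one]; linarith
      _ = 4/3 := by norm_num
  have hden : (8:ℝ)/9 ≤ ‖(1:ℂ) - (p:ℂ)^(-(2:ℂ)-s)‖ := by
    have := norm_sub_norm_le (1:ℂ) ((p:ℂ)^(-(2:ℂ)-s))
    rw [norm_one] at this
    linarith
  have hA : ‖A s p‖ ≤ 3/2 := by
    rw [A, norm_div]
    calc ‖(1:ℂ) - (p:ℂ)^(-(1:ℂ)-s)‖ / ‖(1:ℂ) - (p:ℂ)^(-(2:ℂ)-s)‖
        ≤ (4/3) / (8/9) := by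
          apply div_le_div₀ (by norm_num) hnum (by norm_num) hden
      _ = 3/2 := by norm_num
  calc ‖A s p‖ ≤ 3/2 := hA
    _ ≤ Real.sqrt 3 := by
        rw [show (3:ℝ)/2 = Real.sqrt ((3/2)^2) from (Real.sqrt_sq (by norm_num)).symm]
        apply Real.sqrt_le_sqrt
        norm_num
    _ ≤ Real.sqrt p := Real.sqrt_le_sqrt hp3'

lemma h_norm_le (hs : 0 < s.re) (α : ℕ) : ‖h s α‖ ≤ 1/(α:ℝ)^((3:ℝ)/2) := by
  rcases eq_or_ne α 0 with rfl|hα0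
  · rw [h_zero]
    simp
  by_cases hα : Odd α
  · have hαpos : 0 < α := Nat.pos_of_ne_zero hα0
    have hα1 : (1:ℝ) ≤ (α:ℝ) := by exact_mod_cast hαpos
    have hprod : ∏ q ∈ α.primeFactors, ‖A s q‖ ≤ Real.sqrt α := by
      calc ∏ q ∈ α.primeFactors, ‖A s q‖ ≤ ∏ q ∈ α.primeFactors, Real.sqrt q := by
            apply Finset.prod_le_prod (fun q _ => norm_nonneg _)
            intro q hq
            have hqp := Nat.prime_of_mem_primeFactors hq
            have hqdvd := Nat.dvd_of_mem_primeFactors hq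
            have hqodd : Odd q := by
              rcases Nat.even_or_odd q with he|ho
              · exfalso
                have h2q : 2 ∣ q := he.two_dvd
                have : 2 ∣ α := h2q.trans hqdvd
                rw [Nat.odd_iff] at hα
                omega
              · exact ho
            exact A_norm_le hs hqp hqodd
        _ = Real.sqrt (∏ q ∈ α.primeFactors, (q:ℝ)) := by
            rw [Real.sqrt_eq_rpow, ← Real.finset_prod_rpow _ _ (fun q _ => Nat.cast_nonneg q)]
            apply Finset.prod_congr rfl
            intro q _
            rw [Real.sqrt_eq_rpow]
        _ ≤ Real.sqrt α := by
            apply Real.sqrt_le_sqrt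
            have h1 : (∏ q ∈ α.primeFactors, q) ≤ α :=
              Nat.le_of_dvd hαpos (Nat.prod_primeFactors_dvd α)
            calc (∏ q ∈ α.primeFactors, (q:ℝ)) = ((∏ q ∈ α.primeFactors, q : ℕ):ℝ) := by
                  push_cast; rfl
              _ ≤ (α:ℝ) := by exact_mod_cast h1
    have hμ : ‖(moebius α : ℂ)‖ ≤ 1 := by
      rw [Complex.norm_intCast]
      exact_mod_cast ArithmeticFunction.abs_moebius_le_one
    have hα2 : ‖((α:ℂ))^2‖ = (α:ℝ)^2 := by
      rw [norm_pow, Complex.norm_natCast]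
    have hαR : (0:ℝ) < (α:ℝ) := by exact_mod_cast hαpos
    have key : 1/(α:ℝ)^2 * Real.sqrt α ≤ 1/(α:ℝ)^((3:ℝ)/2) := by
      rw [Real.sqrt_eq_rpow]
      rw [show ((α:ℝ)^2 = (α:ℝ)^(2:ℝ)) from (Real.rpow_two _).symm]
      rw [one_div, one_div, ← Real.rpow_neg hαR.le, ← Real.rpow_add hαR,
        show (-2 + 2⁻¹ : ℝ) = -(3/2) by norm_num, Real.rpow_neg hαR.le, ← one_div]
    rw [h, if_pos hα, norm_mul, norm_div, hα2, norm_prod]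
    refine le_trans (mul_le_mul ?_ hprod
      (Finset.prod_nonneg fun q _ => norm_nonneg _) (by positivity)) key
    exact (div_le_div_iff_of_pos_right (by positivity)).mpr hμ

  · rw [h, if_neg hα]
    simp
    positivity

lemma h_summable (hs : 0 < s.re) : Summable (fun α => ‖h s α‖) := by
  apply Summable.of_nonneg_of_le (fun α => norm_nonneg _) (h_norm_le hs)
  exact Real.summable_one_div_nat_rpow.mpr (by norm_num)


lemma local_h (hp : p.Prime) :
    ∑' e : ℕ, h s (p^e) = if Odd p then D s p else 1 := by
  by_cases hodd : Odd p
  · rw [if_pos hodd]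
    rw [tsum_eq_sum (s := ({0, 1} : Finset ℕ)) ?_]
    · rw [Finset.sum_pair (by norm_num), pow_zero, h_one, pow_one,
        h, if_pos hodd, moebius_apply_prime hp, hp.primeFactors, Finset.prod_singleton, D]
      have h2 : ((p:ℂ))^(-(2:ℂ)) = ((p:ℂ)^2)⁻¹ := by
        rw [Complex.cpow_neg, Complex.cpow_two]
      rw [h2]
      push_cast
      ring
    · intro e he
      simp only [Finset.mem_insert, Finset.mem_singleton] at he
      push_neg at he
      have hμ0 : moebius (p^e) = 0 := by
        rw [moebius_apply_prime_pow hp (by omega), if_neg (by omega)]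
      rw [h]
      split
      · rw [hμ0]; simp
      · rfl
  · rw [if_neg hodd]
    have hp2 : p = 2 := by
      rcases hp.eq_two_or_odd' with h2|h2
      · exact h2
      · exact absurd h2 hodd
    subst hp2
    rw [tsum_eq_single 0 ?_]
    · simpa using h_one
    intro e he
    have : ¬ Odd (2^e) := by
      rw [Nat.not_odd_iff_even]
      exact (Nat.even_pow).mpr ⟨even_two, he⟩
    rw [h, if_neg this]

noncomputable def G (s : ℂ) : ℕ → ℂ := fun p => if p.Prime ∧ Odd p then D s p else 1

lemma hasProd_D (hs : 0 < s.re) :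
    HasProd (fun p : {p : ℕ // p.Prime ∧ Odd p} => D s (p:ℕ)) (∑' α, h s α) := by
  have H := EulerProduct.eulerProduct_hasProd (f := h s) h_one (fun {m n} hc => h_mult hc)
    ((h_summable hs)) h_zero
  have H1 : HasProd (fun p : Nat.Primes => G s (p:ℕ)) (∑' α, h s α) := by
    refine H.congr_fun fun p => ?_
    rw [G]
    have := local_h (s := s) p.prop
    by_cases hodd : Odd (p:ℕ)
    · rw [if_pos ⟨p.prop, hodd⟩, this, if_pos hodd]
    · rw [if_neg (fun hc => hodd hc.2), this, if_neg hodd]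
  have H2 : HasProd (Set.mulIndicator {p : ℕ | p.Prime} (G s)) (∑' α, h s α) :=
    hasProd_subtype_iff_mulIndicator.mp H1
  have hind : Set.mulIndicator {p : ℕ | p.Prime} (G s)
      = Set.mulIndicator {p : ℕ | p.Prime ∧ Odd p} (G s) := by
    funext q
    by_cases hq : q.Prime ∧ Odd q
    · rw [Set.mulIndicator_of_mem (show q ∈ {p : ℕ | p.Prime} from hq.1),
        Set.mulIndicator_of_mem (show q ∈ {p : ℕ | p.Prime ∧ Odd p} from hq)]
    · by_cases hq1 : q.Prime
      · rw [Set.mulIndicator_of_mem (show q ∈ {p : ℕ | p.Prime} from hq1),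
          Set.mulIndicator_of_notMem (show q ∉ {p : ℕ | p.Prime ∧ Odd p} from hq),
          G, if_neg hq]
      · rw [Set.mulIndicator_of_notMem (show q ∉ {p : ℕ | p.Prime} from hq1),
          Set.mulIndicator_of_notMem (show q ∉ {p : ℕ | p.Prime ∧ Odd p} from hq)]
  rw [hind] at H2
  have H3 : HasProd ((G s) ∘ (Subtype.val : {p : ℕ // p.Prime ∧ Odd p} → ℕ))
      (∑' α, h s α) := hasProd_subtype_iff_mulIndicator.mpr H2
  refine H3.congr_fun fun p => ?_
  show D s (p:ℕ) = G s (p:ℕ)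
  rw [G, if_pos p.prop]


lemma term_eq (hs : 0 < s.re) (α : ℕ) :
    (if Odd α then ((moebius α : ℂ) / (α:ℂ)^2) * ∑' m : ℕ, f s α m else 0)
      = (riemannZeta (1+s) / riemannZeta (2+s)) * A s 2 * h s α := by
  by_cases hα : Odd α
  · rw [if_pos hα, tsum_f hs hα, h, if_pos hα]
    have hα0 : α ≠ 0 := by rintro rfl; simp at hα
    have h2 : (2*α).primeFactors = insert 2 α.primeFactors := by
      rw [Nat.primeFactors_mul two_ne_zero hα0, Nat.Prime.primeFactors Nat.prime_two]
      exact (Finset.insert_eq _ _).symm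
    have h2n : 2 ∉ α.primeFactors := by
      intro hmem
      have := Nat.dvd_of_mem_primeFactors hmem
      rw [Nat.odd_iff] at hα
      omega
    rw [h2, Finset.prod_insert h2n]
    ring
  · rw [if_neg hα, h, if_neg hα, mul_zero]

lemma A_two : A s 2 = (1 - (2:ℂ)^(-(1:ℂ)-s))/(1 - (2:ℂ)^(-(2:ℂ)-s)) := by
  rw [A]
  norm_num

end DSI



/-- The Dirichlet series identity
`∑_{α odd} (μ(α)/α²) ∑_{(m,2α)=1} φ(m²)/m^{3+s}
  = (ζ(1+s)/ζ(2+s)) ((1−2^{−1−s})/(1−2^{−2−s})) ∏_{p odd} (1 − p^{−2}(1−p^{−1−s})/(1−p^{−2−s}))`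
for `Re(s) > 0`, with absolute convergence of all series and the product. -/
theorem dirichlet_series_identity_one (s : ℂ) (hs : 0 < s.re) :
    (∀ α : ℕ, Odd α → Summable (fun m : ℕ =>
      ‖if Nat.Coprime m (2 * α) then
          (Nat.totient (m ^ 2) : ℂ) / (m : ℂ) ^ ((3 : ℂ) + s) else 0‖)) ∧
    Summable (fun α : ℕ => ‖if Odd α then
        ((ArithmeticFunction.moebius α : ℂ) / (α : ℂ) ^ 2) *
          ∑' m : ℕ, (if Nat.Coprime m (2 * α) then
            (Nat.totient (m ^ 2) : ℂ) / (m : ℂ) ^ ((3 : ℂ) + s) else 0)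
      else 0‖) ∧
    Multipliable (fun p : {p : ℕ // p.Prime ∧ Odd p} =>
      (1 : ℂ) - (p.1 : ℂ) ^ (-(2 : ℂ)) *
        ((1 - (p.1 : ℂ) ^ (-(1 : ℂ) - s)) / (1 - (p.1 : ℂ) ^ (-(2 : ℂ) - s)))) ∧
    (∑' α : ℕ, (if Odd α then
        ((ArithmeticFunction.moebius α : ℂ) / (α : ℂ) ^ 2) *
          ∑' m : ℕ, (if Nat.Coprime m (2 * α) then
            (Nat.totient (m ^ 2) : ℂ) / (m : ℂ) ^ ((3 : ℂ) + s) else 0)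
      else 0))
      = (riemannZeta (1 + s) / riemannZeta (2 + s)) *
        ((1 - (2 : ℂ) ^ (-(1 : ℂ) - s)) / (1 - (2 : ℂ) ^ (-(2 : ℂ) - s))) *
        ∏' p : {p : ℕ // p.Prime ∧ Odd p},
          ((1 : ℂ) - (p.1 : ℂ) ^ (-(2 : ℂ)) *
            ((1 - (p.1 : ℂ) ^ (-(1 : ℂ) - s)) / (1 - (p.1 : ℂ) ^ (-(2 : ℂ) - s)))) := by

  refine ⟨fun α _ => DSI.f_summable hs α, ?_, ?_, ?_⟩
  · show Summable (fun α : ℕ => ‖if Odd α then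
        ((ArithmeticFunction.moebius α : ℂ) / (α : ℂ) ^ 2) * ∑' m : ℕ, DSI.f s α m else 0‖)
    have hS : (fun α : ℕ => ‖if Odd α then
        ((ArithmeticFunction.moebius α : ℂ) / (α : ℂ) ^ 2) * ∑' m : ℕ, DSI.f s α m else 0‖)
        = fun α => ‖(riemannZeta (1+s)/riemannZeta (2+s)) * DSI.A s 2‖ * ‖DSI.h s α‖ := by
      funext α
      rw [DSI.term_eq hs α, norm_mul]
    rw [hS]
    exact (DSI.h_summable hs).mul_left _
  · exact (DSI.hasProd_D hs).multipliable
  · show (∑' α : ℕ, (if Odd α then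
        ((ArithmeticFunction.moebius α : ℂ) / (α : ℂ) ^ 2) * ∑' m : ℕ, DSI.f s α m else 0)) = _
    rw [tsum_congr (DSI.term_eq hs), tsum_mul_left, ← (DSI.hasProd_D hs).tprod_eq, DSI.A_two]
    rfl
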